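/- For every infinite sequence σ of truth assignments over AP and every co-safe LTL formula φ: σ ⊨ φ if and only if there exists i ≥ 0 such that the finite prefix σ_{≤i} satisfies φ. -/
import Mathlib


/-- LTL formulas over atoms `α`, with constants `tt`/`ff`, negation, conjunction,
disjunction, next `○` and until `U`. -/
inductive LTL (α : Type) : Type where
  | tt : LTL α
  | ff : LTL α
  | atom : α → LTL α
  | not : LTL α → LTL α
  | and : LTL α → LTL α → LTL α
  | or : LTL α → LTL α → LTL α
  | next : LTL α → LTL α
  | untl : LTL α → LTL α → LTL α

/-- Satisfaction `⟨σ,i⟩ ⊨ φ` over infinite traces `σ : ℕ → Set α`. -/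
def SatInf {α : Type} (σ : ℕ → Set α) : ℕ → LTL α → Prop
  | _, .tt => True
  | _, .ff => False
  | i, .atom p => p ∈ σ i
  | i, .not φ => ¬ SatInf σ i φ
  | i, .and φ ψ => SatInf σ i φ ∧ SatInf σ i ψ
  | i, .or φ ψ => SatInf σ i φ ∨ SatInf σ i ψ
  | i, .next φ => SatInf σ (i + 1) φ
  | i, .untl φ ψ => ∃ j, i ≤ j ∧ SatInf σ j ψ ∧ ∀ k, i ≤ k → k < j → SatInf σ k φ

/-- Satisfaction `⟨σ,i⟩ ⊨ φ` over finite traces `σ : List (Set α)`;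
positions of `σ` are the indices `< σ.length`. -/
def SatFin {α : Type} (σ : List (Set α)) : ℕ → LTL α → Prop
  | _, .tt => True
  | _, .ff => False
  | i, .atom p => p ∈ σ.getD i ∅
  | i, .not φ => ¬ SatFin σ i φ
  | i, .and φ ψ => SatFin σ i φ ∧ SatFin σ i ψ
  | i, .or φ ψ => SatFin σ i φ ∨ SatFin σ i ψ
  | i, .next φ => i + 1 < σ.length ∧ SatFin σ (i + 1) φ
  | i, .untl φ ψ =>
      ∃ j, i ≤ j ∧ j < σ.length ∧ SatFin σ j ψ ∧ ∀ k, i ≤ k → k < j → SatFin σ k φ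

/-- The co-safe fragment of LTL: negation on atoms only. -/
inductive CoSafe {α : Type} : LTL α → Prop
  | atom (p : α) : CoSafe (.atom p)
  | natom (p : α) : CoSafe (.not (.atom p))
  | and {φ ψ : LTL α} : CoSafe φ → CoSafe ψ → CoSafe (.and φ ψ)
  | or {φ ψ : LTL α} : CoSafe φ → CoSafe ψ → CoSafe (.or φ ψ)
  | next {φ : LTL α} : CoSafe φ → CoSafe (.next φ)
  | untl {φ ψ : LTL α} : CoSafe φ → CoSafe ψ → CoSafe (.untl φ ψ)

/-- The finite prefix `σ₀, …, σᵢ` of an infinite trace `σ`. -/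
def prefixUpTo {α : Type} (σ : ℕ → Set α) (i : ℕ) : List (Set α) :=
  (List.range (i + 1)).map σ

/-- Concatenation `w · σ'` of a finite trace with an infinite trace. -/
def appendInf {α : Type} (w : List (Set α)) (σ' : ℕ → Set α) : ℕ → Set α :=
  fun n => w.getD n (σ' (n - w.length))

lemma prefix_length {α : Type} (σ : ℕ → Set α) (n : ℕ) :
    (prefixUpTo σ n).length = n + 1 := by
  simp [prefixUpTo]

lemma prefix_getD {α : Type} (σ : ℕ → Set α) {i n : ℕ} (h : i ≤ n) :
    (prefixUpTo σ n).getD i ∅ = σ i := by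
  rw [List.getD_eq_getElem _ _ (by simpa [prefix_length] using Nat.lt_succ_of_le h)]
  simp [prefixUpTo]

lemma satFin_mono {α : Type} (σ : ℕ → Set α) {φ : LTL α} (hφ : CoSafe φ) :
    ∀ {i n m : ℕ}, i ≤ n → n ≤ m →
      SatFin (prefixUpTo σ n) i φ → SatFin (prefixUpTo σ m) i φ := by
  induction hφ with
  | atom p =>
    intro i n m hin hnm h
    simp only [SatFin] at *
    rwa [prefix_getD σ (hin.trans hnm), ← prefix_getD σ hin]
  | natom p =>
    intro i n m hin hnm h
    simp only [SatFin] at *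
    rwa [prefix_getD σ (hin.trans hnm), ← prefix_getD σ hin]
  | and _ _ ih1 ih2 =>
    intro i n m hin hnm h
    exact ⟨ih1 hin hnm h.1, ih2 hin hnm h.2⟩
  | or _ _ ih1 ih2 =>
    intro i n m hin hnm h
    exact h.imp (ih1 hin hnm) (ih2 hin hnm)
  | next _ ih =>
    intro i n m hin hnm h
    have h1 : i + 1 ≤ n := by
      have := h.1; rw [prefix_length] at this; omega
    exact ⟨by rw [prefix_length]; omega, ih h1 hnm h.2⟩
  | untl _ _ ih1 ih2 =>
    intro i n m hin hnm h
    obtain ⟨j, hij, hjl, hψ, hφ'⟩ := h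
    rw [prefix_length] at hjl
    refine ⟨j, hij, by rw [prefix_length]; omega, ih2 (by omega) hnm hψ, ?_⟩
    intro k hik hkj
    exact ih1 (by omega) hnm (hφ' k hik hkj)

lemma satFin_to_inf {α : Type} (σ : ℕ → Set α) {φ : LTL α} (hφ : CoSafe φ) :
    ∀ {i n : ℕ}, i ≤ n → SatFin (prefixUpTo σ n) i φ → SatInf σ i φ := by
  induction hφ with
  | atom p =>
    intro i n hin h
    simp only [SatFin, prefix_getD σ hin] at h
    exact h
  | natom p =>
    intro i n hin h
    simp only [SatFin, prefix_getD σ hin] at h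
    exact h
  | and _ _ ih1 ih2 =>
    intro i n hin h
    exact ⟨ih1 hin h.1, ih2 hin h.2⟩
  | or _ _ ih1 ih2 =>
    intro i n hin h
    exact h.imp (ih1 hin) (ih2 hin)
  | next _ ih =>
    intro i n hin h
    have h1 : i + 1 ≤ n := by have := h.1; rw [prefix_length] at this; omega
    exact ih h1 h.2
  | untl _ _ ih1 ih2 =>
    intro i n hin h
    obtain ⟨j, hij, hjl, hψ, hφ'⟩ := h
    rw [prefix_length] at hjl
    exact ⟨j, hij, ih2 (by omega) hψ, fun k hik hkj => ih1 (by omega) (hφ' k hik hkj)⟩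

lemma satInf_to_fin {α : Type} (σ : ℕ → Set α) {φ : LTL α} (hφ : CoSafe φ) :
    ∀ {i : ℕ}, SatInf σ i φ → ∃ n, i ≤ n ∧ SatFin (prefixUpTo σ n) i φ := by
  induction hφ with
  | atom p =>
    intro i h
    refine ⟨i, le_refl i, ?_⟩
    simp only [SatFin, prefix_getD σ (le_refl i)]
    exact h
  | natom p =>
    intro i h
    refine ⟨i, le_refl i, ?_⟩
    simp only [SatFin, prefix_getD σ (le_refl i)]
    exact h
  | and h1 h2 ih1 ih2 =>
    intro i h
    obtain ⟨n1, hn1, hs1⟩ := ih1 h.1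
    obtain ⟨n2, hn2, hs2⟩ := ih2 h.2
    exact ⟨max n1 n2, le_trans hn1 (le_max_left _ _),
      satFin_mono σ h1 hn1 (le_max_left _ _) hs1,
      satFin_mono σ h2 hn2 (le_max_right _ _) hs2⟩
  | or h1 h2 ih1 ih2 =>
    intro i h
    rcases h with h | h
    · obtain ⟨n, hn, hs⟩ := ih1 h
      exact ⟨n, hn, Or.inl hs⟩
    · obtain ⟨n, hn, hs⟩ := ih2 h
      exact ⟨n, hn, Or.inr hs⟩
  | next _ ih =>
    intro i h
    obtain ⟨n, hn, hs⟩ := ih h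
    exact ⟨n, by omega, by rw [prefix_length]; omega, hs⟩
  | untl h1 h2 ih1 ih2 =>
    intro i h
    obtain ⟨j, hij, hψ, hφ'⟩ := h
    obtain ⟨nj, hnj, hsj⟩ := ih2 hψ
    -- for each k with i ≤ k < j, choose a prefix length
    have hch : ∀ k, i ≤ k → k < j → ∃ n, k ≤ n ∧ SatFin (prefixUpTo σ n) k _ :=
      fun k hik hkj => ih1 (hφ' k hik hkj)
    classical
    choose f hf1 hf2 using fun k (hk : i ≤ k ∧ k < j) => hch k hk.1 hk.2
    let N := max nj ((Finset.range j).sup fun k => if hk : i ≤ k ∧ k < j then f k hk else 0)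
    refine ⟨N, le_trans (hij.trans hnj) (le_max_left _ _),
      j, hij, by rw [prefix_length]; exact Nat.lt_succ_of_le (hnj.trans (le_max_left _ _)),
      satFin_mono σ h2 hnj (le_max_left _ _) hsj, ?_⟩
    intro k hik hkj
    have hk : i ≤ k ∧ k < j := ⟨hik, hkj⟩
    have hle : f k hk ≤ N := by
      refine le_trans ?_ (le_max_right _ _)
      have := Finset.le_sup (f := fun k => if hk : i ≤ k ∧ k < j then f k hk else 0)
        (Finset.mem_range.mpr hkj)
      simpa [hk] using this
    exact satFin_mono σ h1 (hf1 k hk) hle (hf2 k hk)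

/-- For every infinite sequence σ of truth assignments over AP and
every co-safe LTL formula φ: σ ⊨ φ iff there exists i ≥ 0 such that the finite
prefix σ_{≤i} satisfies φ. -/
theorem cosafe_sat_iff_finite_prefix {AP : Type} (σ : ℕ → Set AP)
    (φ : LTL AP) (hφ : CoSafe φ) :
    SatInf σ 0 φ ↔ ∃ i : ℕ, SatFin (prefixUpTo σ i) 0 φ := by
  constructor
  · intro h
    obtain ⟨n, _, hs⟩ := satInf_to_fin σ hφ h
    exact ⟨n, hs⟩
  · rintro ⟨n, hs⟩
    exact satFin_to_inf σ hφ (Nat.zero_le n) hs
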